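/- If C is a generating set of the ℤ-module of ℤ-flows of G, then the image of C under reduction modulo q generates the ℤ_q-module of ℤ_q-flows of G, for every positive integer q. -/
import Mathlib


open Finset

noncomputable section

attribute [local instance] Classical.propDecidable

/-- A finite multigraph with a fixed orientation: each edge has a source and a target. -/
structure Multigraph (V E : Type) where
  src : E → V
  tgt : E → V

namespace Multigraph

variable {V E : Type} [Fintype V] [Fintype E] [DecidableEq V] [DecidableEq E]

/-- A `ℤ_q`-flow: conservation at every vertex. -/
def IsFlow (G : Multigraph V E) (q : ℕ) (f : E → ZMod q) : Prop :=
  ∀ v : V, ∑ e ∈ univ.filter (fun e => G.tgt e = v), f e =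
           ∑ e ∈ univ.filter (fun e => G.src e = v), f e

/-- A `ℤ`-flow: conservation at every vertex. -/
def IsZFlow (G : Multigraph V E) (f : E → ℤ) : Prop :=
  ∀ v : V, ∑ e ∈ univ.filter (fun e => G.tgt e = v), f e =
           ∑ e ∈ univ.filter (fun e => G.src e = v), f e

/-- The support of a flow: the set of edges with nonzero value. -/
def flowSupport {q : ℕ} (f : E → ZMod q) : Finset E :=
  univ.filter (fun e => f e ≠ 0)

/-- Flow partition function (complex variable). -/
def Zflow (G : Multigraph V E) (q : ℕ) [NeZero q] (x : ℂ) : ℂ :=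
  ∑ f ∈ univ.filter (fun f : E → ZMod q => G.IsFlow q f), x ^ (flowSupport f).card

/-- Flow partition function (real variable). -/
def ZflowR (G : Multigraph V E) (q : ℕ) [NeZero q] (x : ℝ) : ℝ :=
  ∑ f ∈ univ.filter (fun f : E → ZMod q => G.IsFlow q f), x ^ (flowSupport f).card

/-- Potts partition function: sum over colourings of `w ^ (number of monochromatic edges)`. -/
def ZPotts (G : Multigraph V E) (q : ℕ) (w : ℂ) : ℂ :=
  ∑ σ : V → Fin q, w ^ (univ.filter (fun e => σ (G.src e) = σ (G.tgt e))).card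

/-- The simple graph on `V` induced by the edges in `F` (loops/multiplicities dropped;
this does not change connected components). -/
def compRel (G : Multigraph V E) (F : Finset E) : SimpleGraph V :=
  SimpleGraph.fromRel (fun v w => ∃ e ∈ F, G.src e = v ∧ G.tgt e = w)

/-- Number of connected components of the spanning subgraph `(V, F)`. -/
def compCount (G : Multigraph V E) (F : Finset E) : ℕ :=
  Nat.card (G.compRel F).ConnectedComponent

/-- Random cluster partition function. -/
def ZRC (G : Multigraph V E) (q : ℕ) (y : ℂ) : ℂ :=
  ∑ F : Finset E, (q : ℂ) ^ (G.compCount F) * y ^ F.card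

/-- The spanning subgraph `(V, A)`. -/
def edgeSubgraph (G : Multigraph V E) (A : Finset E) : Multigraph V {e : E // e ∈ A} :=
  ⟨fun e => G.src e.1, fun e => G.tgt e.1⟩

/-- Deletion of the edge `e`. -/
def deleteEdge (G : Multigraph V E) (e : E) : Multigraph V {e' : E // e' ≠ e} :=
  ⟨fun e' => G.src e'.1, fun e' => G.tgt e'.1⟩

/-- Contraction of the edge `e`: the edge `e` is removed and every endpoint equal to
`G.tgt e` is redirected to `G.src e`, merging the two endpoints of `e`. -/
def contractEdge (G : Multigraph V E) (e : E) : Multigraph V {e' : E // e' ≠ e} :=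
  ⟨fun e' => if G.src e'.1 = G.tgt e then G.src e else G.src e'.1,
   fun e' => if G.tgt e'.1 = G.tgt e then G.src e else G.tgt e'.1⟩

end Multigraph

/-- The `(L+1) × (L+1)` grid graph, with horizontal and vertical edges oriented
in the positive direction. -/
def gridGraph (L : ℕ) :
    Multigraph (Fin (L+1) × Fin (L+1)) ((Fin L × Fin (L+1)) ⊕ (Fin (L+1) × Fin L)) :=
  ⟨Sum.elim (fun p => (p.1.castSucc, p.2)) (fun p => (p.1, p.2.castSucc)),
   Sum.elim (fun p => (p.1.succ, p.2)) (fun p => (p.1, p.2.succ))⟩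

section Aux

open Multigraph

variable {V E : Type} [Fintype V] [Fintype E] [DecidableEq V] [DecidableEq E]

/-- The divergence (boundary) map as a linear map. -/
def Dlin (G : Multigraph V E) : (E → ℤ) →ₗ[ℤ] (V → ℤ) where
  toFun g := fun v =>
    ∑ e ∈ univ.filter (fun e => G.tgt e = v), g e -
      ∑ e ∈ univ.filter (fun e => G.src e = v), g e
  map_add' g h := by
    funext v
    simp only [Pi.add_apply, Finset.sum_add_distrib]
    ring
  map_smul' c g := by
    funext v
    simp only [Pi.smul_apply, smul_eq_mul, ← Finset.mul_sum, RingHom.id_apply]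
    ring

lemma isZFlow_iff (G : Multigraph V E) (g : E → ℤ) :
    G.IsZFlow g ↔ Dlin G g = 0 := by
  constructor
  · intro h
    funext v
    simp [Dlin, h v]
  · intro h v
    have := congrFun h v
    simp only [Dlin, LinearMap.coe_mk, AddHom.coe_mk, Pi.zero_apply] at this
    omega

/-- Two vertices connected by an edge. -/
def erel (G : Multigraph V E) : V → V → Prop :=
  fun u v => ∃ e, G.src e = u ∧ G.tgt e = v

lemma pi_src_tgt (G : Multigraph V E) (e : E) :
    Quot.mk (erel G) (G.src e) = Quot.mk (erel G) (G.tgt e) :=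
  Quot.sound ⟨e, rfl, rfl⟩

lemma fiber_sum {α β M : Type*} [Fintype α] [Fintype β] [DecidableEq β]
    [AddCommMonoid M] (t : α → β) (P : β → Prop) [DecidablePred P] (g : α → M) :
    ∑ v ∈ univ.filter P, ∑ e ∈ univ.filter (fun e => t e = v), g e
      = ∑ e ∈ univ.filter (fun e => P (t e)), g e := by
  have h : ∀ v, ∑ e ∈ univ.filter (fun e => t e = v), g e
      = ∑ e : α, if t e = v then g e else 0 := fun v => Finset.sum_filter _ _
  simp_rw [h]
  rw [Finset.sum_comm, Finset.sum_filter]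
  refine Finset.sum_congr rfl fun e _ => ?_
  rw [Finset.sum_ite_eq]
  simp

/-- The sum of the divergence over any union of connected components vanishes. -/
lemma classSum_div (G : Multigraph V E) (g : E → ℤ) (x : V) :
    ∑ v ∈ univ.filter (fun v => Quot.mk (erel G) v = Quot.mk (erel G) x),
      Dlin G g v = 0 := by
  simp only [Dlin, LinearMap.coe_mk, AddHom.coe_mk, Finset.sum_sub_distrib]
  rw [fiber_sum (G.tgt) (fun v => Quot.mk (erel G) v = Quot.mk (erel G) x) g,
    fiber_sum (G.src) (fun v => Quot.mk (erel G) v = Quot.mk (erel G) x) g]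
  have : (univ.filter (fun e => Quot.mk (erel G) (G.tgt e) = Quot.mk (erel G) x))
      = (univ.filter (fun e => Quot.mk (erel G) (G.src e) = Quot.mk (erel G) x)) := by
    apply Finset.filter_congr
    intro e _
    rw [pi_src_tgt]
  rw [this, sub_self]

lemma single_sub_mem (G : Multigraph V E) {u v : V} (h : Relation.EqvGen (erel G) u v) :
    (Pi.single u 1 - Pi.single v 1 : V → ℤ) ∈ LinearMap.range (Dlin G) := by
  induction h with
  | rel a b hab =>
    obtain ⟨e, hs, ht⟩ := hab
    refine ⟨-Pi.single e 1, ?_⟩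
    funext x
    simp only [map_neg, Pi.neg_apply, Dlin, LinearMap.coe_mk, AddHom.coe_mk,
      Pi.sub_apply]
    have htgt : ∑ e' ∈ univ.filter (fun e' => G.tgt e' = x), (Pi.single e 1 : E → ℤ) e'
        = if G.tgt e = x then 1 else 0 := by
      simp [Pi.single_apply, Finset.sum_ite_eq']
    have hsrc : ∑ e' ∈ univ.filter (fun e' => G.src e' = x), (Pi.single e 1 : E → ℤ) e'
        = if G.src e = x then 1 else 0 := by
      simp [Pi.single_apply, Finset.sum_ite_eq']
    rw [htgt, hsrc, hs, ht]
    simp [Pi.single_apply]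
    by_cases h1 : a = x <;> by_cases h2 : b = x <;> simp [h1, h2, eq_comm]
  | refl a => simp
  | symm a b _ ih =>
    have := Submodule.neg_mem _ ih
    simpa using this
  | trans a b c _ _ ih1 ih2 =>
    have := Submodule.add_mem _ ih1 ih2
    simpa using this

/-- If all component sums of `w` vanish then `w` is a divergence. -/
lemma mem_range_div (G : Multigraph V E) (w : V → ℤ)
    (hw : ∀ x : V, ∑ v ∈ univ.filter
        (fun v => Quot.mk (erel G) v = Quot.mk (erel G) x), w v = 0) :
    w ∈ LinearMap.range (Dlin G) := by
  classical
  set r : V → V := fun v => Quot.out (Quot.mk (erel G) v) with hr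
  have hπr : ∀ v, Quot.mk (erel G) (r v) = Quot.mk (erel G) v := by
    intro v; simp [hr, Quot.out_eq]
  have hkey : w = ∑ v : V, w v • (Pi.single v 1 - Pi.single (r v) 1) := by
    funext x
    rw [Finset.sum_apply]
    simp only [Pi.smul_apply, Pi.sub_apply, smul_eq_mul, mul_sub,
      Finset.sum_sub_distrib]
    have e1 : ∑ v : V, w v * (Pi.single v 1 : V → ℤ) x = w x := by
      rw [Finset.sum_eq_single x]
      · simp
      · intro v _ hv; simp [Pi.single_apply, Ne.symm hv]
      · simp
    have e2 : ∑ v : V, w v * (Pi.single (r v) 1 : V → ℤ) x = 0 := by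
      have : ∀ v : V, w v * (Pi.single (r v) 1 : V → ℤ) x
          = if r v = x then w v else 0 := by
        intro v
        by_cases h : r v = x <;> simp [Pi.single_apply, h]
      simp only [this]
      rw [← Finset.sum_filter]
      rcases eq_or_ne (r x) x with hx | hx
      · have : univ.filter (fun v => r v = x)
            = univ.filter (fun v => Quot.mk (erel G) v = Quot.mk (erel G) x) := by
          ext v
          simp only [Finset.mem_filter, Finset.mem_univ, true_and]
          constructor
          · intro h; rw [← h, hπr]
          · intro h
            have : r v = r x := by simp [hr, h]
            rw [this, hx]
        rw [this, hw x]
      · rw [Finset.filter_false_of_mem, Finset.sum_empty]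
        intro v _ hv
        apply hx
        have : r x = r v := by
          simp only [hr]
          congr 1
          rw [← hv, hπr]
        rw [this, hv]
    rw [e1, e2, sub_zero]
  rw [hkey]
  apply Submodule.sum_mem
  intro v _
  apply Submodule.smul_mem
  apply single_sub_mem
  apply Quot.eqvGen_exact
  rw [hπr]

/-- Every `ZMod q` flow lifts to a `ℤ`-flow. -/
lemma flow_lift (G : Multigraph V E) (q : ℕ) (hq : 0 < q) (f : E → ZMod q)
    (hf : G.IsFlow q f) :
    ∃ g : E → ℤ, G.IsZFlow g ∧ ∀ e, ((g e : ZMod q)) = f e := by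
  haveI : NeZero q := ⟨hq.ne'⟩
  set f₀ : E → ℤ := fun e => ((f e).val : ℤ) with hf₀
  have hcast : ∀ e, ((f₀ e : ZMod q)) = f e := by
    intro e
    simp [hf₀, ZMod.natCast_val, ZMod.cast_id]
  set d : V → ℤ := Dlin G f₀ with hd
  have hdvd : ∀ v, (q : ℤ) ∣ d v := by
    intro v
    rw [← ZMod.intCast_zmod_eq_zero_iff_dvd]
    have : ((d v : ZMod q))
        = ∑ e ∈ univ.filter (fun e => G.tgt e = v), f e -
          ∑ e ∈ univ.filter (fun e => G.src e = v), f e := by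
      simp only [hd, Dlin, LinearMap.coe_mk, AddHom.coe_mk]
      push_cast
      rw [Finset.sum_congr rfl fun e _ => hcast e, Finset.sum_congr rfl fun e _ => hcast e]
    rw [this, hf v, sub_self]
  set w : V → ℤ := fun v => d v / q with hw
  have hqw : ∀ v, (q : ℤ) * w v = d v := fun v => Int.mul_ediv_cancel' (hdvd v)
  have hwsum : ∀ x : V, ∑ v ∈ univ.filter
      (fun v => Quot.mk (erel G) v = Quot.mk (erel G) x), w v = 0 := by
    intro x
    have h0 : (q : ℤ) * ∑ v ∈ univ.filter
        (fun v => Quot.mk (erel G) v = Quot.mk (erel G) x), w v = 0 := by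
      rw [Finset.mul_sum]
      rw [Finset.sum_congr rfl fun v _ => hqw v]
      exact classSum_div G f₀ x
    rcases mul_eq_zero.mp h0 with h | h
    · exact absurd h (by exact_mod_cast hq.ne')
    · exact h
  obtain ⟨k, hk⟩ := mem_range_div G w hwsum
  refine ⟨f₀ - (q : ℤ) • k, ?_, ?_⟩
  · rw [isZFlow_iff]
    rw [map_sub, map_smul, hk]
    funext v
    simp only [Pi.sub_apply, Pi.smul_apply, smul_eq_mul, Pi.zero_apply]
    rw [hqw v]
    simp [hd]
  · intro e
    simp only [Pi.sub_apply, Pi.smul_apply, smul_eq_mul]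
    push_cast
    rw [hcast e]
    simp

end Aux

theorem generating_set_reduction {V E : Type} [Fintype V] [Fintype E] [DecidableEq V] [DecidableEq E]
    (G : Multigraph V E) (r : ℕ) (C : Fin r → (E → ℤ))
    (hCflow : ∀ i, G.IsZFlow (C i))
    (hgen : ∀ f : E → ℤ, G.IsZFlow f → ∃ c : Fin r → ℤ, f = ∑ i, c i • C i)
    (q : ℕ) (hq : 0 < q) :
    ∀ f : E → ZMod q, G.IsFlow q f →
      ∃ c : Fin r → ZMod q, f = ∑ i, c i • (fun e => ((C i e : ZMod q))) := by
  intro f hf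
  obtain ⟨g, hg, hge⟩ := flow_lift G q hq f hf
  obtain ⟨c, hc⟩ := hgen g hg
  refine ⟨fun i => ((c i : ZMod q)), ?_⟩
  funext e
  have hge' := congrFun hc e
  rw [Finset.sum_apply] at hge'
  rw [← hge e, hge', Finset.sum_apply]
  push_cast
  simp
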